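/- arXiv:0706.2431 — 6 statements merged into one kernel-verified Lean document; each statement's English description precedes it below -/
import Mathlib

section
/- Let G be a complete multipartite graph. For any binary vertex labeling, if d_P denotes (number of 0-labeled vertices minus number of 1-labeled vertices) in part P, then the difference between the number of 0-labeled edges and 1-labeled edges of G equals the sum over unordered pairs of distinct parts {P,Q} of d_P·d_Q, which equals (1/2)·((Σ_P d_P)² - Σ_P d_P²). -/
open Finset

/-- Number of edges of `G` whose induced label (mod-2 sum of endpoint labels) is `c`. -/
def edgeCount {V : Type*} [Fintype V] [DecidableEq V] (G : SimpleGraph V)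
    [DecidableRel G.Adj] (f : V → ZMod 2) (c : ZMod 2) : ℕ :=
  (G.edgeFinset.filter fun e =>
    Sym2.lift ⟨fun a b => f a + f b, fun _ _ => add_comm _ _⟩ e = c).card

instance {ι : Type*} [DecidableEq ι] (V : ι → Type*) :
    DecidableRel (SimpleGraph.completeMultipartiteGraph V).Adj :=
  fun v w => inferInstanceAs (Decidable (v.1 ≠ w.1))

section Aux

variable {W : Type*} [Fintype W] [DecidableEq W]

/-- Doubling a sum over the edge finset gives a sum over ordered adjacent pairs. -/
lemma two_mul_sum_edgeFinset (G : SimpleGraph W) [DecidableRel G.Adj]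
    (F : Sym2 W → ℤ) :
    2 * ∑ e ∈ G.edgeFinset, F e
      = ∑ p ∈ univ.filter (fun p : W × W => G.Adj p.1 p.2), F (Sym2.mk.uncurry p) := by
  rw [← Finset.sum_fiberwise_of_maps_to (g := Sym2.mk.uncurry)
    (t := G.edgeFinset) (fun p hp => by
      simp only [mem_filter] at hp
      simpa [Function.uncurry] using hp.2)]
  rw [Finset.mul_sum]
  refine Finset.sum_congr rfl ?_
  intro e he
  rw [SimpleGraph.mem_edgeFinset] at he
  induction e with
  | h v w =>
    have hvw : G.Adj v w := he
    have hne : (v, w) ≠ (w, v) := by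
      intro h
      exact hvw.ne (congrArg Prod.fst h)
    have hset : (univ.filter fun p : W × W => G.Adj p.1 p.2).filter
        (fun p => Sym2.mk.uncurry p = s(v, w)) = {(v, w), (w, v)} := by
      ext ⟨a, b⟩
      simp only [mem_filter, mem_univ, true_and, mem_insert, mem_singleton, Function.uncurry_apply_pair,
        Sym2.eq_iff, Prod.mk.injEq]
      constructor
      · rintro ⟨_, (⟨rfl, rfl⟩ | ⟨rfl, rfl⟩)⟩
        · exact Or.inl ⟨rfl, rfl⟩
        · exact Or.inr ⟨rfl, rfl⟩
      · rintro (⟨rfl, rfl⟩ | ⟨rfl, rfl⟩)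
        · exact ⟨hvw, Or.inl ⟨rfl, rfl⟩⟩
        · exact ⟨hvw.symm, Or.inr ⟨rfl, rfl⟩⟩
    rw [hset, Finset.sum_pair hne]
    have : Sym2.mk.uncurry (w, v) = Sym2.mk.uncurry (v, w) := Sym2.eq_swap
    rw [this, Function.uncurry_apply_pair]
    ring

end Aux


theorem complete_multipartite_edge_label_difference
    {ι : Type*} [Fintype ι] [DecidableEq ι] (V : ι → Type*)
    [∀ i, Fintype (V i)] [∀ i, DecidableEq (V i)]
    (f : (Σ i, V i) → ZMod 2) (d : ι → ℤ)
    (hd : ∀ i, d i = ((Finset.univ.filter fun v : V i => f ⟨i, v⟩ = 0).card : ℤ)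
        - ((Finset.univ.filter fun v : V i => f ⟨i, v⟩ = 1).card : ℤ)) :
    2 * ((edgeCount (SimpleGraph.completeMultipartiteGraph V) f 0 : ℤ)
        - (edgeCount (SimpleGraph.completeMultipartiteGraph V) f 1 : ℤ))
      = ∑ i, ∑ j ∈ Finset.univ \ {i}, d i * d j ∧
    2 * ((edgeCount (SimpleGraph.completeMultipartiteGraph V) f 0 : ℤ)
        - (edgeCount (SimpleGraph.completeMultipartiteGraph V) f 1 : ℤ))
      = (∑ i, d i) ^ 2 - ∑ i, (d i) ^ 2 := by
  classical
  set G := SimpleGraph.completeMultipartiteGraph V with hG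
  -- sign function
  set s : (Σ i, V i) → ℤ := fun v => if f v = 0 then 1 else -1 with hs
  set L : Sym2 (Σ i, V i) → ZMod 2 :=
    Sym2.lift ⟨fun a b => f a + f b, fun _ _ => add_comm _ _⟩ with hL
  set F : Sym2 (Σ i, V i) → ℤ :=
    Sym2.lift ⟨fun a b => s a * s b, fun _ _ => mul_comm _ _⟩ with hF
  have hFL : ∀ e, F e = if L e = 0 then 1 else -1 := by
    intro e
    induction e with
    | h a b =>
      simp only [hF, hL, Sym2.lift_mk, hs]
      generalize f a = x
      generalize f b = y
      revert x y; decide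
  -- d i as a sum of signs
  have hvals : ∀ x : ZMod 2, (if x = 0 then (1:ℤ) else -1)
      = (if x = 0 then (1:ℤ) else 0) - (if x = 1 then 1 else 0) := by decide
  have hdsum : ∀ i, d i = ∑ v : V i, s ⟨i, v⟩ := by
    intro i
    rw [hd i]
    have hpt : ∀ v : V i, s ⟨i, v⟩ = (if f ⟨i, v⟩ = 0 then (1:ℤ) else 0)
        - (if f ⟨i, v⟩ = 1 then 1 else 0) := fun v => hvals _
    rw [Finset.sum_congr rfl fun v _ => hpt v, Finset.sum_sub_distrib,
      Finset.sum_boole, Finset.sum_boole]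
  have hedge : (edgeCount G f 0 : ℤ) - (edgeCount G f 1 : ℤ)
      = ∑ e ∈ G.edgeFinset, F e := by
    show ((G.edgeFinset.filter fun e => L e = 0).card : ℤ)
        - ((G.edgeFinset.filter fun e => L e = 1).card : ℤ) = _
    rw [← Finset.sum_boole, ← Finset.sum_boole, ← Finset.sum_sub_distrib]
    refine Finset.sum_congr rfl fun e _ => ?_
    rw [hFL e]
    exact (hvals (L e)).symm
  have key : 2 * ((edgeCount G f 0 : ℤ) - (edgeCount G f 1 : ℤ))
      = ∑ i, ∑ j ∈ Finset.univ \ {i}, d i * d j := by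
    rw [hedge, two_mul_sum_edgeFinset]
    have hpair : ∑ p ∈ univ.filter (fun p : (Σ i, V i) × (Σ i, V i) => G.Adj p.1 p.2),
        F (Sym2.mk.uncurry p) = ∑ v : Σ i, V i, ∑ w : Σ i, V i,
          if v.1 ≠ w.1 then s v * s w else 0 := by
      rw [Finset.sum_filter, ← Finset.sum_product']
      rfl
    rw [hpair]
    rw [← Finset.univ_sigma_univ, Finset.sum_sigma]
    refine Finset.sum_congr rfl fun i _ => ?_
    have : ∀ x : V i, ∑ w ∈ (univ : Finset ι).sigma (fun j => (univ : Finset (V j))),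
        (if (⟨i, x⟩ : Σ j, V j).1 ≠ w.1 then s ⟨i, x⟩ * s w else 0)
        = ∑ j ∈ univ \ {i}, s ⟨i, x⟩ * ∑ y : V j, s ⟨j, y⟩ := by
      intro x
      rw [Finset.sum_sigma]
      rw [← Finset.sum_subset (Finset.sdiff_subset (s := univ) (t := {i}))]
      · refine Finset.sum_congr rfl fun j hj => ?_
        simp only [mem_sdiff, mem_singleton] at hj
        rw [Finset.mul_sum]
        refine Finset.sum_congr rfl fun y _ => ?_
        rw [if_pos]
        exact fun h => hj.2 h.symm
      · intro j _ hj
        simp only [mem_sdiff, mem_univ, true_and, mem_singleton, not_not] at hj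
        subst hj
        simp
    rw [Finset.sum_congr rfl fun x _ => this x]
    rw [Finset.sum_comm]
    refine Finset.sum_congr rfl fun j _ => ?_
    rw [hdsum i, hdsum j, Finset.sum_mul]
  refine ⟨key, ?_⟩
  rw [key]
  have expand : ∀ i : ι, ∑ j ∈ Finset.univ \ {i}, d i * d j
      = (∑ j, d i * d j) - d i * d i := by
    intro i
    rw [Finset.sum_sdiff_eq_sub (Finset.subset_univ {i}), Finset.sum_singleton]
  rw [Finset.sum_congr rfl fun i _ => expand i, Finset.sum_sub_distrib]
  rw [← Finset.sum_mul_sum]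
  ring_nf
end

section
/- The cordial edge deficiency of the complete multipartite graph with k odd parts equals max{0, ⌊k/2⌋ - 1}. In particular, the complete multipartite graph is cordial (ced = 0) if and only if k ≤ 3. -/
open Finset

/-- A labeling is friendly if the vertex label counts differ by at most 1. -/
def Friendly {V : Type*} [Fintype V] (f : V → ZMod 2) : Prop :=
  |((Finset.univ.filter fun v => f v = 0).card : ℤ)
    - ((Finset.univ.filter fun v => f v = 1).card : ℤ)| ≤ 1

namespace CedAux

/-- the ±1 sign of a label -/
def sgn {α : Type*} (f : α → ZMod 2) (v : α) : ℤ := if f v = 0 then 1 else -1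

lemma zmod2_cases (x : ZMod 2) : x = 0 ∨ x = 1 := by revert x; decide

lemma sgn_mul {α : Type*} (f : α → ZMod 2) (a b : α) :
    sgn f a * sgn f b = if f a + f b = 0 then 1 else -1 := by
  unfold sgn
  rcases zmod2_cases (f a) with h | h <;> rcases zmod2_cases (f b) with h' | h' <;>
    simp [h, h'] <;> decide

variable {α : Type*} [Fintype α] [DecidableEq α]

/-- the symmetric weight function on unordered pairs -/
def w (f : α → ZMod 2) : Sym2 α → ℤ :=
  Sym2.lift ⟨fun a b => sgn f a * sgn f b, fun _ _ => mul_comm _ _⟩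

lemma step1 (G : SimpleGraph α) [DecidableRel G.Adj] (f : α → ZMod 2) :
    ((edgeCount G f 0 : ℤ) - edgeCount G f 1) = ∑ e ∈ G.edgeFinset, w f e := by
  classical
  set lab : Sym2 α → ZMod 2 :=
    Sym2.lift ⟨fun a b => f a + f b, fun _ _ => add_comm _ _⟩ with hlab
  have hsplit := Finset.sum_filter_add_sum_filter_not G.edgeFinset
    (fun e => lab e = 0) (w f)
  have hw : ∀ e : Sym2 α, w f e = if lab e = 0 then 1 else -1 := by
    intro e
    induction e using Sym2.ind with
    | _ a b => simp only [w, hlab, Sym2.lift_mk]; exact sgn_mul f a b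
  have h0 : ∑ e ∈ G.edgeFinset.filter (fun e => lab e = 0), w f e
      = (edgeCount G f 0 : ℤ) := by
    rw [edgeCount, ← hlab]
    rw [Finset.sum_congr rfl (fun e he => by
      rw [hw e, if_pos (Finset.mem_filter.mp he).2])]
    simp
  have h1 : ∑ e ∈ G.edgeFinset.filter (fun e => ¬ lab e = 0), w f e
      = -(edgeCount G f 1 : ℤ) := by
    have hfe : G.edgeFinset.filter (fun e => ¬ lab e = 0)
        = G.edgeFinset.filter (fun e => lab e = 1) := by
      apply Finset.filter_congr
      intro e _
      rcases zmod2_cases (lab e) with h | h <;> simp [h]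
    rw [hfe, edgeCount, ← hlab]
    rw [Finset.sum_congr rfl (fun e he => by
      have h1 : lab e = 1 := (Finset.mem_filter.mp he).2
      rw [hw e, if_neg (by rw [h1]; decide)])]
    simp
  rw [← hsplit, h0, h1]
  ring

lemma step2 (G : SimpleGraph α) [DecidableRel G.Adj] (f : α → ZMod 2) :
    ∑ p ∈ (univ ×ˢ univ).filter (fun p : α × α => G.Adj p.1 p.2),
        sgn f p.1 * sgn f p.2 = 2 * ∑ e ∈ G.edgeFinset, w f e := by
  classical
  set P := (univ ×ˢ univ).filter (fun p : α × α => G.Adj p.1 p.2) with hP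
  have hcomp := Finset.sum_comp (s := P) (w f) (fun p : α × α => s(p.1, p.2))
  have hlhs : ∑ p ∈ P, w f s(p.1, p.2) = ∑ p ∈ P, sgn f p.1 * sgn f p.2 := by
    apply Finset.sum_congr rfl
    intro p _
    rcases p with ⟨x, y⟩
    rfl
  have himg : P.image (fun p : α × α => s(p.1, p.2)) = G.edgeFinset := by
    ext e
    induction e using Sym2.ind with
    | _ a b =>
      simp only [Finset.mem_image, hP, Finset.mem_filter, Finset.mem_product,
        Finset.mem_univ, true_and, SimpleGraph.mem_edgeFinset,
        SimpleGraph.mem_edgeSet]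
      constructor
      · rintro ⟨⟨x, y⟩, hadj, hxy⟩
        rw [Sym2.eq_iff] at hxy
        rcases hxy with ⟨rfl, rfl⟩ | ⟨rfl, rfl⟩
        · exact hadj
        · exact hadj.symm
      · intro h
        exact ⟨(a, b), h, rfl⟩
  have hfib : ∀ e ∈ G.edgeFinset,
      (P.filter fun p : α × α => s(p.1, p.2) = e).card = 2 := by
    intro e he
    induction e using Sym2.ind with
    | _ a b =>
      have hadj : G.Adj a b := by
        rwa [SimpleGraph.mem_edgeFinset, SimpleGraph.mem_edgeSet] at he
      have hne : a ≠ b := hadj.ne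
      have : (P.filter fun p : α × α => s(p.1, p.2) = s(a, b))
          = {(a, b), (b, a)} := by
        ext ⟨x, y⟩
        simp only [hP, Finset.mem_filter, Finset.mem_product, Finset.mem_univ,
          true_and, Sym2.eq_iff, Finset.mem_insert, Finset.mem_singleton,
          Prod.mk.injEq]
        constructor
        · rintro ⟨_, ⟨rfl, rfl⟩ | ⟨rfl, rfl⟩⟩
          · left; exact ⟨rfl, rfl⟩
          · right; exact ⟨rfl, rfl⟩
        · rintro (⟨rfl, rfl⟩ | ⟨rfl, rfl⟩)
          · exact ⟨hadj, Or.inl ⟨rfl, rfl⟩⟩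
          · exact ⟨hadj.symm, Or.inr ⟨rfl, rfl⟩⟩
      rw [this]
      rw [Finset.card_insert_of_notMem (by simp [hne, Prod.ext_iff]),
        Finset.card_singleton]
  rw [hlhs] at hcomp
  rw [hcomp, himg]
  rw [Finset.sum_congr rfl (fun e he => by rw [hfib e he])]
  rw [Finset.mul_sum]
  apply Finset.sum_congr rfl
  intro e _
  push_cast
  ring

section Sigma

variable {ι : Type*} [Fintype ι] [DecidableEq ι] {V : ι → Type*}
  [∀ i, Fintype (V i)] [∀ i, DecidableEq (V i)]

/-- per-part sum of signs -/
def tpart (f : (Σ i, V i) → ZMod 2) (i : ι) : ℤ := ∑ x : V i, sgn f ⟨i, x⟩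

lemma key (f : (Σ i, V i) → ZMod 2) :
    2 * ((edgeCount (SimpleGraph.completeMultipartiteGraph V) f 0 : ℤ)
      - (edgeCount (SimpleGraph.completeMultipartiteGraph V) f 1 : ℤ))
    = (∑ i, tpart f i) ^ 2 - ∑ i, tpart f i ^ 2 := by
  classical
  rw [step1, ← step2]
  rw [Finset.sum_filter, Finset.sum_product]
  have hsplit : ∀ u v : Σ i, V i,
      (if (SimpleGraph.completeMultipartiteGraph V).Adj u v
        then sgn f u * sgn f v else 0)
      = sgn f u * sgn f v - (if u.1 = v.1 then sgn f u * sgn f v else 0) := by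
    intro u v
    by_cases h : u.1 = v.1 <;>
      simp [SimpleGraph.completeMultipartiteGraph, SimpleGraph.comap_adj,
        SimpleGraph.top_adj, h]
  simp_rw [hsplit, Finset.sum_sub_distrib]
  have htot : ∑ v : Σ i, V i, sgn f v = ∑ i, tpart f i := by
    rw [← Finset.univ_sigma_univ, Finset.sum_sigma]
    rfl
  congr 1
  · rw [← htot, sq, Finset.sum_mul_sum]
  · have h1 : ∀ u : Σ i, V i,
        (∑ v : Σ j, V j, if u.1 = v.1 then sgn f u * sgn f v else 0)
        = sgn f u * tpart f u.1 := by
      intro u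
      rw [← Finset.univ_sigma_univ, Finset.sum_sigma]
      have hj : ∀ j : ι, (∑ y : V j, if u.1 = j then sgn f u * sgn f ⟨j, y⟩ else 0)
          = if u.1 = j then sgn f u * tpart f j else 0 := by
        intro j
        by_cases h : u.1 = j
        · simp [h, tpart, Finset.mul_sum]
        · simp [h]
      rw [Finset.sum_congr rfl fun j _ => hj j, Finset.sum_ite_eq]
      simp
    simp_rw [h1]
    rw [← Finset.univ_sigma_univ, Finset.sum_sigma]
    apply Finset.sum_congr rfl
    intro i _
    have hfin : ∑ x : V i, sgn f ⟨i, x⟩ * tpart f i = tpart f i * tpart f i := by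
      rw [← Finset.sum_mul]; rfl
    rw [sq]
    exact hfin

lemma sum_sgn_eq {β : Type*} [Fintype β] [DecidableEq β] (f : β → ZMod 2) :
    ∑ v, sgn f v = ((univ.filter fun v => f v = 0).card : ℤ)
      - ((univ.filter fun v => f v = 1).card : ℤ) := by
  classical
  rw [← Finset.sum_filter_add_sum_filter_not univ (fun v => f v = 0) (sgn f)]
  have h0 : ∑ v ∈ univ.filter (fun v => f v = 0), sgn f v
      = ((univ.filter fun v => f v = 0).card : ℤ) := by
    rw [Finset.sum_congr rfl (fun v hv => by
      rw [sgn, if_pos (Finset.mem_filter.mp hv).2])]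
    simp
  have hfe : univ.filter (fun v : β => ¬ f v = 0) = univ.filter (fun v => f v = 1) := by
    apply Finset.filter_congr
    intro v _
    rcases zmod2_cases (f v) with h | h <;> simp [h]
  have h1 : ∑ v ∈ univ.filter (fun v : β => ¬ f v = 0), sgn f v
      = -((univ.filter fun v => f v = 1).card : ℤ) := by
    rw [hfe]
    rw [Finset.sum_congr rfl (fun v hv => by
      rw [sgn, if_neg (by rw [(Finset.mem_filter.mp hv).2]; decide)])]
    simp
  rw [h0, h1]
  ring

lemma sgn_sub_one_even {β : Type*} (f : β → ZMod 2) (v : β) :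
    (2 : ℤ) ∣ (sgn f v - 1) := by
  rw [sgn]; split_ifs <;> norm_num

lemma sum_tpart (f : (Σ i, V i) → ZMod 2) :
    ∑ i, tpart f i = ∑ v, sgn f v := by
  rw [← Finset.univ_sigma_univ, Finset.sum_sigma]
  rfl

lemma tpart_sub_card (f : (Σ i, V i) → ZMod 2) (i : ι) :
    (2 : ℤ) ∣ (tpart f i - Fintype.card (V i)) := by
  have h : tpart f i - (Fintype.card (V i) : ℤ)
      = ∑ x : V i, (sgn f ⟨i, x⟩ - 1) := by
    rw [Finset.sum_sub_distrib, Finset.sum_const]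
    simp [tpart]
  rw [h]
  exact Finset.dvd_sum fun x _ => sgn_sub_one_even f _

lemma lower (f : (Σ i, V i) → ZMod 2) (hf : Friendly f) :
    (univ.filter fun i => Odd (Fintype.card (V i))).card / 2
      ≤ ((edgeCount (SimpleGraph.completeMultipartiteGraph V) f 0 : ℤ)
        - (edgeCount (SimpleGraph.completeMultipartiteGraph V) f 1 : ℤ)).natAbs := by
  classical
  set k := (univ.filter fun i => Odd (Fintype.card (V i))).card with hk
  set D := ((edgeCount (SimpleGraph.completeMultipartiteGraph V) f 0 : ℤ)
        - (edgeCount (SimpleGraph.completeMultipartiteGraph V) f 1 : ℤ)) with hD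
  set T := ∑ i, tpart f i with hT
  set Q := ∑ i, tpart f i ^ 2 with hQ
  have hkey : 2 * D = T ^ 2 - Q := key f
  have habs : |T| ≤ 1 := by
    rw [hT, sum_tpart, sum_sgn_eq]
    exact hf
  have hT1 : -1 ≤ T ∧ T ≤ 1 := abs_le.mp habs
  -- Q ≥ k
  have hQk : (k : ℤ) ≤ Q := by
    have hterm : ∀ i ∈ univ.filter (fun i => Odd (Fintype.card (V i))),
        (1 : ℤ) ≤ tpart f i ^ 2 := by
      intro i hi
      have hodd : Odd (Fintype.card (V i)) := (Finset.mem_filter.mp hi).2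
      obtain ⟨m, hm⟩ := hodd
      obtain ⟨c, hc⟩ := tpart_sub_card f i
      have hcast : (Fintype.card (V i) : ℤ) = 2 * m + 1 := by exact_mod_cast hm
      have hne : tpart f i ≠ 0 := by
        intro h
        rw [h] at hc
        omega
      have h1 : 1 ≤ |tpart f i| := Int.one_le_abs hne
      calc (1 : ℤ) = 1 * 1 := by ring
        _ ≤ |tpart f i| * |tpart f i| :=
            mul_le_mul h1 h1 (by norm_num) (abs_nonneg _)
        _ = tpart f i ^ 2 := by rw [abs_mul_abs_self, sq]
    calc (k : ℤ) = ∑ _i ∈ univ.filter (fun i => Odd (Fintype.card (V i))), (1 : ℤ) := by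
          simp [hk]
      _ ≤ ∑ i ∈ univ.filter (fun i => Odd (Fintype.card (V i))), tpart f i ^ 2 :=
          Finset.sum_le_sum hterm
      _ ≤ Q := Finset.sum_le_sum_of_subset_of_nonneg (Finset.filter_subset _ _)
          (fun i _ _ => sq_nonneg _)
  -- parity of T - k
  have hTk : (2 : ℤ) ∣ (T - k) := by
    have hk' : (k : ℤ) = ∑ i, (if Odd (Fintype.card (V i)) then (1 : ℤ) else 0) := by
      rw [Finset.sum_ite, Finset.sum_const, Finset.sum_const]
      simp [hk]
    rw [hT, hk', ← Finset.sum_sub_distrib]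
    apply Finset.dvd_sum
    intro i _
    obtain ⟨c, hc⟩ := tpart_sub_card f i
    by_cases h : Odd (Fintype.card (V i))
    · obtain ⟨m, hm⟩ := h
      have hcast : (Fintype.card (V i) : ℤ) = 2 * m + 1 := by exact_mod_cast hm
      rw [if_pos ⟨m, hm⟩]
      omega
    · rw [Nat.not_odd_iff_even] at h
      obtain ⟨m, hm⟩ := h
      have hcast : (Fintype.card (V i) : ℤ) = m + m := by exact_mod_cast hm
      rw [if_neg (by rw [Nat.not_odd_iff_even]; exact ⟨m, hm⟩)]
      omega
  have hT3 : T = -1 ∨ T = 0 ∨ T = 1 := by omega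
  rcases hT3 with h | h | h <;> rw [h] at hkey <;> norm_num at hkey <;> omega

lemma sum_range_ite (n m : ℕ) :
    (∑ j ∈ Finset.range n, if j < m then (1 : ℤ) else -1)
      = 2 * (min m n : ℤ) - n := by
  induction n with
  | zero => simp
  | succ n ih =>
    rw [Finset.sum_range_succ, ih]
    split_ifs with h
    · push_cast; omega
    · push_cast; omega

lemma upper [∀ i, Nonempty (V i)] :
    ∃ f : (Σ i, V i) → ZMod 2, Friendly f ∧
      ((edgeCount (SimpleGraph.completeMultipartiteGraph V) f 0 : ℤ)
        - (edgeCount (SimpleGraph.completeMultipartiteGraph V) f 1 : ℤ)).natAbs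
      = (univ.filter fun i => Odd (Fintype.card (V i))).card / 2 := by
  classical
  set O := univ.filter fun i : ι => Odd (Fintype.card (V i)) with hO
  set k := O.card with hkk
  set c := (k + 1) / 2 with hc
  let e : ∀ i, V i ≃ Fin (Fintype.card (V i)) := fun i => Fintype.equivFin (V i)
  let eO : {x // x ∈ O} ≃ Fin k :=
    (Fintype.equivFin _).trans (finCongr (Fintype.card_coe O))
  set d : ι → ℤ := fun i =>
    if h : i ∈ O then (if (eO ⟨i, h⟩ : ℕ) < c then 1 else -1) else 0 with hd
  set m : ι → ℕ := fun i => ((Fintype.card (V i) : ℤ) + d i).toNat / 2 with hm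
  set f : (Σ i, V i) → ZMod 2 :=
    fun v => if ((e v.1) v.2 : ℕ) < m v.1 then 0 else 1 with hf
  -- basic facts about d
  have hd01 : ∀ i, d i = -1 ∨ d i = 0 ∨ d i = 1 := by
    intro i
    simp only [hd]
    split_ifs <;> simp
  have hdO : ∀ i, i ∈ O → d i = 1 ∨ d i = -1 := by
    intro i h
    simp only [hd, dif_pos h]
    split_ifs <;> simp
  have hdO' : ∀ i, i ∉ O → d i = 0 := by
    intro i h
    simp only [hd, dif_neg h]
  -- tpart computation
  have htp : ∀ i, tpart f i = d i := by
    intro i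
    have h1 : tpart f i = ∑ j : Fin (Fintype.card (V i)),
        (if (j : ℕ) < m i then (1 : ℤ) else -1) := by
      rw [tpart]
      apply Fintype.sum_equiv (e i)
      intro x
      simp only [sgn, hf]
      by_cases h : ((e i) x : ℕ) < m i
      · simp [h]
      · simp [h]
    rw [h1, Fin.sum_univ_eq_sum_range (fun j => if j < m i then (1 : ℤ) else -1),
      sum_range_ite]
    have hmi : m i = ((Fintype.card (V i) : ℤ) + d i).toNat / 2 := rfl
    have hpos : 0 < Fintype.card (V i) := Fintype.card_pos
    by_cases hiO : i ∈ O
    · have hodd : Odd (Fintype.card (V i)) := (Finset.mem_filter.mp hiO).2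
      have hpar : Fintype.card (V i) % 2 = 1 := Nat.odd_iff.mp hodd
      rcases hdO i hiO with h2 | h2 <;> rw [hmi, h2] <;> omega
    · have heven : Even (Fintype.card (V i)) := by
        rw [← Nat.not_odd_iff_even]
        intro hodd
        exact hiO (by simp [hO, hodd])
      have hpar : Fintype.card (V i) % 2 = 0 := Nat.even_iff.mp heven
      rw [hmi, hdO' i hiO]
      omega
  -- Q computation
  have hQ : ∑ i, tpart f i ^ 2 = (k : ℤ) := by
    have h1 : ∀ i, tpart f i ^ 2 = if i ∈ O then (1 : ℤ) else 0 := by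
      intro i
      rw [htp i]
      by_cases h : i ∈ O
      · rcases hdO i h with h1 | h1 <;> rw [h1, if_pos h] <;> norm_num
      · rw [hdO' i h, if_neg h]; norm_num
    rw [Finset.sum_congr rfl fun i _ => h1 i, Finset.sum_ite_mem]
    simp [hkk]
  -- T computation
  have hT : ∑ i, tpart f i = 2 * (c : ℤ) - k := by
    have h1 : ∑ i, tpart f i = ∑ i ∈ O, d i := by
      rw [Finset.sum_congr rfl fun i _ => htp i]
      exact (Finset.sum_subset (Finset.subset_univ O)
        (fun x _ hx => hdO' x hx)).symm
    have h2 : ∑ i ∈ O, d i = ∑ x : {x // x ∈ O}, d x.1 := by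
      rw [Finset.univ_eq_attach, Finset.sum_attach O d]
    have h3 : ∑ x : {x // x ∈ O}, d x.1
        = ∑ j : Fin k, (if (j : ℕ) < c then (1 : ℤ) else -1) := by
      apply Fintype.sum_equiv eO
      intro x
      obtain ⟨x, hx⟩ := x
      simp only [hd, dif_pos hx]
    rw [h1, h2, h3,
      Fin.sum_univ_eq_sum_range (fun j => if j < c then (1 : ℤ) else -1) k,
      sum_range_ite]
    omega
  have hkey := key f
  rw [hQ, hT] at hkey
  refine ⟨f, ?_, ?_⟩
  · show |_ - _| ≤ 1
    rw [← sum_sgn_eq, ← sum_tpart, hT, abs_le]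
    constructor <;> omega
  · have h01 : (2 * (c : ℤ) - k) = 0 ∨ (2 * (c : ℤ) - k) = 1 := by omega
    rcases h01 with h | h <;> rw [h] at hkey <;> norm_num at hkey <;> omega

end Sigma

end CedAux

theorem ced_complete_multipartite
    {ι : Type*} [Fintype ι] [DecidableEq ι] (V : ι → Type*)
    [∀ i, Fintype (V i)] [∀ i, DecidableEq (V i)] [∀ i, Nonempty (V i)]
    (k : ℕ) (hk : k = (Finset.univ.filter fun i => Odd (Fintype.card (V i))).card) :
    sInf {n : ℕ | ∃ f : (Σ i, V i) → ZMod 2, Friendly f ∧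
        n = ((edgeCount (SimpleGraph.completeMultipartiteGraph V) f 0 : ℤ)
          - (edgeCount (SimpleGraph.completeMultipartiteGraph V) f 1 : ℤ)).natAbs - 1}
      = k / 2 - 1 ∧
    ((∃ f : (Σ i, V i) → ZMod 2, Friendly f ∧
        ((edgeCount (SimpleGraph.completeMultipartiteGraph V) f 0 : ℤ)
          - (edgeCount (SimpleGraph.completeMultipartiteGraph V) f 1 : ℤ)).natAbs ≤ 1)
      ↔ k ≤ 3) := by
  classical
  subst hk
  obtain ⟨f₀, hf₀, hD₀⟩ := CedAux.upper (V := V)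
  set k := (Finset.univ.filter fun i => Odd (Fintype.card (V i))).card with hk
  constructor
  · apply le_antisymm
    · refine Nat.sInf_le ?_
      exact ⟨f₀, hf₀, by rw [hD₀]⟩
    · refine le_csInf ⟨_, ⟨f₀, hf₀, rfl⟩⟩ ?_
      rintro n ⟨f, hf, rfl⟩
      have := CedAux.lower f hf
      omega
  · constructor
    · rintro ⟨f, hf, h1⟩
      have := CedAux.lower f hf
      omega
    · intro h3
      exact ⟨f₀, hf₀, by omega⟩
end

section
/- A complete k-partite graph (all parts counted) is cordial if and only if the number of parts with an odd number of vertices is at most three. -/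
open Finset

/-! ### Auxiliary lemmas -/

lemma zmod2_ne_zero (x : ZMod 2) : ¬ x = 0 ↔ x = 1 := by revert x; decide

lemma chi_mul (a b : ZMod 2) :
    (if a = 0 then (1:ℤ) else -1) * (if b = 0 then 1 else -1)
      = if a + b = 0 then 1 else -1 := by revert a b; decide

lemma sum_chi {W : Type*} [Fintype W] [DecidableEq W] (h : W → ZMod 2) :
    ∑ x, (if h x = 0 then (1:ℤ) else -1)
      = ((univ.filter fun x => h x = 0).card : ℤ)
        - ((univ.filter fun x => h x = 1).card : ℤ) := by
  rw [Finset.sum_ite, Finset.sum_const, Finset.sum_const]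
  have : (univ.filter fun x => ¬ h x = 0) = univ.filter fun x => h x = 1 := by
    apply Finset.filter_congr; intro x _; exact zmod2_ne_zero _
  rw [this]; push_cast; ring

lemma card_split {W : Type*} [Fintype W] [DecidableEq W] (h : W → ZMod 2) :
    (univ.filter fun x => h x = 0).card + (univ.filter fun x => h x = 1).card
      = Fintype.card W := by
  have : (univ.filter fun x => ¬ h x = 0) = univ.filter fun x => h x = 1 := by
    apply Finset.filter_congr; intro x _; exact zmod2_ne_zero _
  rw [← this, Finset.card_filter_add_card_filter_not, Finset.card_univ]

lemma altsum (k : ℕ) : ∑ j : Fin k, ((-1:ℤ))^(j:ℕ) = if Even k then 0 else 1 := by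
  induction k with
  | zero => simp
  | succ n ih =>
    rw [Fin.sum_univ_castSucc]
    simp only [Fin.coe_castSucc, ih, Fin.val_last, Nat.even_add_one]
    rcases Nat.even_or_odd n with h | h
    · simp [h, h.neg_one_pow]
    · have hne : ¬ Even n := Nat.not_even_iff_odd.2 h
      simp [hne, h.neg_one_pow]

lemma exists_label (W : Type*) [Fintype W] [DecidableEq W] (t : ℕ)
    (ht : t ≤ Fintype.card W) :
    ∃ g : W → ZMod 2, (univ.filter fun x => g x = 1).card = t := by
  obtain ⟨s, -, hs⟩ := Finset.exists_subset_card_eq (s := (univ : Finset W)) (by simpa using ht)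
  refine ⟨fun x => if x ∈ s then 1 else 0, ?_⟩
  rw [← hs]; congr 1; ext x
  by_cases hx : x ∈ s <;> simp [hx]

lemma two_mul_edgeCount {V : Type*} [Fintype V] [DecidableEq V] (G : SimpleGraph V)
    [DecidableRel G.Adj] (f : V → ZMod 2) (c : ZMod 2) :
    2 * edgeCount G f c
      = ((univ : Finset (V × V)).filter fun p =>
          G.Adj p.1 p.2 ∧ f p.1 + f p.2 = c).card := by
  classical
  let G' : SimpleGraph V :=
    { Adj := fun u v => G.Adj u v ∧ f u + f v = c
      symm := ⟨fun u v (h : G.Adj u v ∧ f u + f v = c) => ⟨h.1.symm, by rw [add_comm]; exact h.2⟩⟩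
      loopless := ⟨fun u h => G.irrefl h.1⟩ }
  haveI : DecidableRel G'.Adj := fun u v => instDecidableAnd
  have he : edgeCount G f c = G'.edgeFinset.card := by
    unfold edgeCount
    congr 1
    ext e
    refine Sym2.ind (fun a b => ?_) e
    simp [SimpleGraph.mem_edgeFinset, SimpleGraph.mem_edgeSet, G', and_comm]
  rw [he, SimpleGraph.two_mul_card_edgeFinset]
  congr 1
  ext ⟨a, b⟩
  simp [G']

section Multipartite
variable {ι : Type*} [Fintype ι] [DecidableEq ι] (V : ι → Type*)
    [∀ i, Fintype (V i)] [∀ i, DecidableEq (V i)] (f : (Σ i, V i) → ZMod 2)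

/-- Per-part label balance: number of `0`-labelled minus `1`-labelled vertices. -/
def dpart (i : ι) : ℤ :=
  ((univ.filter fun y : V i => f ⟨i, y⟩ = 0).card : ℤ)
    - ((univ.filter fun y : V i => f ⟨i, y⟩ = 1).card : ℤ)

lemma dpart_chi (i : ι) :
    dpart V f i = ∑ y : V i, (if f ⟨i, y⟩ = 0 then (1:ℤ) else -1) :=
  (sum_chi _).symm

lemma pairs_diff :
    (((univ : Finset ((Σ i, V i) × (Σ i, V i))).filter fun p =>
        p.1.1 ≠ p.2.1 ∧ f p.1 + f p.2 = 0).card : ℤ)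
      - (((univ : Finset ((Σ i, V i) × (Σ i, V i))).filter fun p =>
        p.1.1 ≠ p.2.1 ∧ f p.1 + f p.2 = 1).card : ℤ)
    = (∑ i, ∑ y : V i, (if f ⟨i, y⟩ = 0 then (1:ℤ) else -1))^2
      - ∑ i, (∑ y : V i, (if f ⟨i, y⟩ = 0 then (1:ℤ) else -1))^2 := by
  classical
  set χ : (Σ i, V i) → ℤ := fun v => if f v = 0 then 1 else -1 with hχ
  set e : ι → ℤ := fun i => ∑ y : V i, χ ⟨i, y⟩ with he
  set A : Finset ((Σ i, V i) × (Σ i, V i)) :=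
    univ.filter fun p => p.1.1 ≠ p.2.1 with hA
  have hval : ∀ p : (Σ i, V i) × (Σ i, V i),
      χ p.1 * χ p.2 = if f p.1 + f p.2 = 0 then 1 else -1 :=
    fun p => chi_mul (f p.1) (f p.2)
  have claim1 : ∑ p ∈ A, χ p.1 * χ p.2
      = (((univ : Finset ((Σ i, V i) × (Σ i, V i))).filter fun p =>
          p.1.1 ≠ p.2.1 ∧ f p.1 + f p.2 = 0).card : ℤ)
        - (((univ : Finset ((Σ i, V i) × (Σ i, V i))).filter fun p =>
          p.1.1 ≠ p.2.1 ∧ f p.1 + f p.2 = 1).card : ℤ) := by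
    rw [← Finset.sum_filter_add_sum_filter_not A (fun p => f p.1 + f p.2 = 0)
      (fun p => χ p.1 * χ p.2)]
    have h0 : ∑ p ∈ A.filter (fun p => f p.1 + f p.2 = 0), χ p.1 * χ p.2
        = ((A.filter (fun p => f p.1 + f p.2 = 0)).card : ℤ) := by
      rw [Finset.sum_congr rfl
        (fun p hp => (hval p).trans (if_pos (Finset.mem_filter.1 hp).2)),
        Finset.sum_const, nsmul_eq_mul, mul_one]
    have h1 : ∑ p ∈ A.filter (fun p => ¬ f p.1 + f p.2 = 0), χ p.1 * χ p.2
        = -((A.filter (fun p => ¬ f p.1 + f p.2 = 0)).card : ℤ) := by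
      rw [Finset.sum_congr rfl
        (fun p hp => (hval p).trans (if_neg (Finset.mem_filter.1 hp).2)),
        Finset.sum_const, nsmul_eq_mul, mul_neg_one]
    rw [h0, h1, hA, Finset.filter_filter, Finset.filter_filter]
    have h2 : (univ : Finset ((Σ i, V i) × (Σ i, V i))).filter
          (fun p => p.1.1 ≠ p.2.1 ∧ ¬ f p.1 + f p.2 = 0)
        = univ.filter (fun p => p.1.1 ≠ p.2.1 ∧ f p.1 + f p.2 = 1) := by
      apply Finset.filter_congr
      exact fun p _ => and_congr_right fun _ => zmod2_ne_zero _
    rw [h2]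
    ring
  have claim2 : ∑ p ∈ (univ : Finset ((Σ i, V i) × (Σ i, V i))), χ p.1 * χ p.2
      = (∑ v, χ v)^2 := by
    rw [← Finset.univ_product_univ, Finset.sum_product, sq, Finset.sum_mul_sum]
  have claim3 : ∑ p ∈ (univ : Finset ((Σ i, V i) × (Σ i, V i))).filter
      (fun p => p.1.1 = p.2.1), χ p.1 * χ p.2 = ∑ i, (e i)^2 := by
    rw [Finset.sum_filter, ← Finset.univ_product_univ, Finset.sum_product]
    have inner : ∀ u : Σ i, V i,
        ∑ v : Σ i, V i, (if u.1 = v.1 then χ u * χ v else 0) = χ u * e u.1 := by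
      intro u
      rw [← Finset.univ_sigma_univ, Finset.sum_sigma]
      have step : ∀ j : ι, ∑ y : V j, (if u.1 = j then χ u * χ ⟨j, y⟩ else 0)
          = if u.1 = j then χ u * e j else 0 := by
        intro j
        split
        · rw [Finset.mul_sum]
        · simp
      rw [Finset.sum_congr rfl (fun j _ => step j), Finset.sum_ite_eq]
      simp
    rw [Finset.sum_congr rfl (fun u _ => inner u), ← Finset.univ_sigma_univ,
      Finset.sum_sigma]
    apply Finset.sum_congr rfl
    intro i _
    show ∑ s : V i, χ ⟨i, s⟩ * e i = e i ^ 2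
    rw [← Finset.sum_mul, sq]
  have split := Finset.sum_filter_add_sum_filter_not
    (univ : Finset ((Σ i, V i) × (Σ i, V i))) (fun p => p.1.1 = p.2.1)
    (fun p => χ p.1 * χ p.2)
  have hsum : ∑ v, χ v = ∑ i, e i := by
    rw [← Finset.univ_sigma_univ, Finset.sum_sigma]
  rw [← claim1]
  have hAe : (univ : Finset ((Σ i, V i) × (Σ i, V i))).filter
      (fun p => ¬ p.1.1 = p.2.1) = A := rfl
  rw [claim2, claim3, hsum, hAe] at split
  have : ∑ p ∈ A, χ p.1 * χ p.2 = (∑ i, e i)^2 - ∑ i, (e i)^2 := by linarith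
  rw [this]

lemma vertex_diff :
    ((univ.filter fun v : Σ i, V i => f v = 0).card : ℤ)
      - ((univ.filter fun v : Σ i, V i => f v = 1).card : ℤ)
    = ∑ i, dpart V f i := by
  rw [← sum_chi (fun v : Σ i, V i => f v), ← Finset.univ_sigma_univ, Finset.sum_sigma]
  exact Finset.sum_congr rfl fun i _ => (dpart_chi V f i).symm

lemma edge_diff :
    2 * ((edgeCount (SimpleGraph.completeMultipartiteGraph V) f 0 : ℤ)
        - (edgeCount (SimpleGraph.completeMultipartiteGraph V) f 1 : ℤ))
      = (∑ i, dpart V f i)^2 - ∑ i, (dpart V f i)^2 := by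
  have h0 := two_mul_edgeCount (SimpleGraph.completeMultipartiteGraph V) f 0
  have h1 := two_mul_edgeCount (SimpleGraph.completeMultipartiteGraph V) f 1
  have hadj : ∀ c : ZMod 2, ((univ : Finset ((Σ i, V i) × (Σ i, V i))).filter fun p =>
        (SimpleGraph.completeMultipartiteGraph V).Adj p.1 p.2 ∧ f p.1 + f p.2 = c)
      = (univ.filter fun p => p.1.1 ≠ p.2.1 ∧ f p.1 + f p.2 = c) := by
    intro c
    apply Finset.filter_congr
    exact fun p _ => Iff.rfl
  rw [hadj] at h0 h1
  have key := pairs_diff V f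
  rw [← h0, ← h1] at key
  push_cast at key
  have hd : ∀ i, dpart V f i = ∑ y : V i, (if f ⟨i, y⟩ = 0 then (1:ℤ) else -1) :=
    dpart_chi V f
  simp only [← hd] at key
  linarith

lemma dpart_card (i : ι) :
    dpart V f i = (Fintype.card (V i) : ℤ)
      - 2 * ((univ.filter fun y : V i => f ⟨i, y⟩ = 1).card : ℤ) := by
  have := card_split (fun y : V i => f ⟨i, y⟩)
  unfold dpart
  omega

end Multipartite

theorem complete_multipartite_cordial_iff
    {ι : Type*} [Fintype ι] [DecidableEq ι] (V : ι → Type*)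
    [∀ i, Fintype (V i)] [∀ i, DecidableEq (V i)] [∀ i, Nonempty (V i)] :
    (∃ f : (Σ i, V i) → ZMod 2,
      |((Finset.univ.filter fun v : Σ i, V i => f v = 0).card : ℤ)
        - ((Finset.univ.filter fun v : Σ i, V i => f v = 1).card : ℤ)| ≤ 1 ∧
      |(edgeCount (SimpleGraph.completeMultipartiteGraph V) f 0 : ℤ)
        - (edgeCount (SimpleGraph.completeMultipartiteGraph V) f 1 : ℤ)| ≤ 1)
    ↔ (Finset.univ.filter fun i => Odd (Fintype.card (V i))).card ≤ 3 := by
  classical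
  set O : Finset ι := univ.filter fun i => Odd (Fintype.card (V i)) with hO
  constructor
  · rintro ⟨f, hv, he⟩
    set d : ι → ℤ := dpart V f with hd
    have hS : |∑ i, d i| ≤ 1 := by rw [← vertex_diff V f]; exact hv
    have hE : |(∑ i, d i)^2 - ∑ i, (d i)^2| ≤ 2 := by
      rw [← edge_diff V f, abs_mul]
      calc |(2:ℤ)| * |(edgeCount (SimpleGraph.completeMultipartiteGraph V) f 0 : ℤ)
          - (edgeCount (SimpleGraph.completeMultipartiteGraph V) f 1 : ℤ)|
          ≤ 2 * 1 := by
            rw [abs_two]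
            exact mul_le_mul_of_nonneg_left he (by norm_num)
        _ = 2 := by norm_num
    -- each odd part contributes at least one to ∑ d²
    have hodd : ∀ i ∈ O, (1:ℤ) ≤ (d i)^2 := by
      intro i hi
      rw [hO, Finset.mem_filter] at hi
      have hcard := dpart_card V f i
      have : Odd (d i) := by
        rcases hi.2 with ⟨m, hm⟩
        exact ⟨(m : ℤ) - (univ.filter fun y : V i => f ⟨i, y⟩ = 1).card, by
          rw [← hd] at hcard; rw [hcard, hm]; push_cast; ring⟩
      have hne : d i ≠ 0 := by
        intro h0
        rw [h0] at this
        exact (Int.not_odd_iff_even.2 Even.zero) this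
      have h1 : 1 ≤ |d i| := Int.one_le_abs hne
      calc (1:ℤ) = 1 * 1 := by ring
        _ ≤ |d i| * |d i| := mul_le_mul h1 h1 (by norm_num) (abs_nonneg _)
        _ = (d i)^2 := by rw [← abs_mul, ← sq, abs_sq]
    have hQ : (O.card : ℤ) ≤ ∑ i, (d i)^2 := by
      calc (O.card : ℤ) = ∑ i ∈ O, (1:ℤ) := by simp
        _ ≤ ∑ i ∈ O, (d i)^2 := Finset.sum_le_sum hodd
        _ ≤ ∑ i, (d i)^2 := Finset.sum_le_sum_of_subset_of_nonneg (Finset.subset_univ O)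
            (fun i _ _ => sq_nonneg _)
    have hS2 : (∑ i, d i)^2 ≤ 1 := by
      have := abs_le.1 hS
      nlinarith [this.1, this.2]
    have := abs_le.1 hE
    have : (O.card : ℤ) ≤ 3 := by linarith [this.1, this.2]
    exact_mod_cast this
  · intro hk
    -- construction
    set k := O.card with hkdef
    let eO : {x // x ∈ O} ≃ Fin k := O.equivFin
    -- target number of 1-labels in each part
    let t : ∀ i : ι, ℕ := fun i =>
      if h : i ∈ O then
        (if Even ((eO ⟨i, h⟩ : Fin k) : ℕ) then (Fintype.card (V i) - 1) / 2
         else (Fintype.card (V i) + 1) / 2)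
      else Fintype.card (V i) / 2
    have ht_def : ∀ i : ι, t i = if h : i ∈ O then
        (if Even ((eO ⟨i, h⟩ : Fin k) : ℕ) then (Fintype.card (V i) - 1) / 2
         else (Fintype.card (V i) + 1) / 2)
      else Fintype.card (V i) / 2 := fun i => rfl
    have hcard_pos : ∀ i, 1 ≤ Fintype.card (V i) := fun i => Fintype.card_pos
    have ht_le : ∀ i, t i ≤ Fintype.card (V i) := by
      intro i
      have h1 := hcard_pos i
      rw [ht_def i]
      split
      · rename_i h
        rw [hO, Finset.mem_filter] at h
        rcases h.2 with ⟨m, hm⟩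
        split <;> omega
      · omega
    choose g hg using fun i => exists_label (V i) (t i) (ht_le i)
    set f : (Σ i, V i) → ZMod 2 := fun v => g v.1 v.2 with hf
    have hcount1 : ∀ i, (univ.filter fun y : V i => f ⟨i, y⟩ = 1).card = t i :=
      fun i => hg i
    set d : ι → ℤ := dpart V f with hd
    -- compute d on each part
    have hd_val : ∀ i, d i = (Fintype.card (V i) : ℤ) - 2 * (t i : ℤ) := by
      intro i
      rw [hd, dpart_card V f i, hcount1 i]
    have hd_even : ∀ i, i ∉ O → d i = 0 := by
      intro i hi
      have : ¬ Odd (Fintype.card (V i)) := by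
        intro h; exact hi (by rw [hO]; exact Finset.mem_filter.2 ⟨Finset.mem_univ i, h⟩)
      rw [Nat.not_odd_iff_even] at this
      rcases this with ⟨m, hm⟩
      rw [hd_val i, ht_def i]
      rw [dif_neg hi, hm]
      have : (m + m) / 2 = m := by omega
      rw [this]; push_cast; ring
    have hd_odd : ∀ (x : {y // y ∈ O}), d x.1 = (-1:ℤ)^((eO x : Fin k) : ℕ) := by
      rintro ⟨i, hi⟩
      have hoddc : Odd (Fintype.card (V i)) := by
        rw [hO, Finset.mem_filter] at hi; exact hi.2
      rcases hoddc with ⟨m, hm⟩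
      rw [hd_val i, ht_def i]
      rw [dif_pos hi]
      rcases Nat.even_or_odd ((eO ⟨i, hi⟩ : Fin k) : ℕ) with hp | hp
      · rw [if_pos hp, hp.neg_one_pow, hm]
        have : (2 * m + 1 - 1) / 2 = m := by omega
        rw [this]; push_cast; ring
      · rw [if_neg (Nat.not_even_iff_odd.2 hp), hp.neg_one_pow, hm]
        have : (2 * m + 1 + 1) / 2 = m + 1 := by omega
        rw [this]; push_cast; ring
    -- the global sums
    have hsum_O : ∀ F : ι → ℤ, (∀ i ∉ O, F i = 0) → ∑ i, F i = ∑ i ∈ O, F i := by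
      intro F h
      exact (Finset.sum_subset (Finset.subset_univ O) (fun i _ hi => h i hi)).symm
    have hS : ∑ i, d i = if Even k then 0 else 1 := by
      rw [hsum_O d hd_even, ← Finset.sum_attach O (fun i => d i),
        Finset.sum_congr rfl (fun x _ => hd_odd x), ← Finset.univ_eq_attach,
        Equiv.sum_comp eO (fun j : Fin k => ((-1:ℤ))^(j:ℕ))]
      exact altsum k
    have hQ : ∑ i, (d i)^2 = (k : ℤ) := by
      have hz : ∀ i ∉ O, (d i)^2 = 0 := fun i hi => by rw [hd_even i hi]; ring
      have hone : ∀ x : {y // y ∈ O}, (d x.1)^2 = 1 := by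
        intro x
        rw [hd_odd x, ← pow_mul, mul_comm, pow_mul, neg_one_sq, one_pow]
      rw [hsum_O _ hz, ← Finset.sum_attach O (fun i => (d i)^2),
        Finset.sum_congr rfl (fun x _ => hone x)]
      simp [hkdef]
    refine ⟨f, ?_, ?_⟩
    · rw [vertex_diff V f, ← hd, hS]
      split <;> norm_num
    · have hedge := edge_diff V f
      rw [← hd, hS, hQ] at hedge
      set x : ℤ := (edgeCount (SimpleGraph.completeMultipartiteGraph V) f 0 : ℤ)
        - (edgeCount (SimpleGraph.completeMultipartiteGraph V) f 1 : ℤ) with hx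
      rw [abs_le]
      rcases Nat.even_or_odd k with hp | hp
      · rw [if_pos hp] at hedge
        have hk2 : k % 2 = 0 := Nat.even_iff.1 hp
        constructor <;> omega
      · rw [if_neg (Nat.not_even_iff_odd.2 hp)] at hedge
        have hk2 : k % 2 = 1 := Nat.odd_iff.1 hp
        constructor <;> omega
end

section
/- If G is a complete multipartite graph with n ≥ 1 odd parts, and n = j² + δ for some positive integer j and δ ∈ {-2, 0, 2}, then the cordial vertex deficiency of G is at most j - 1: there exists a binary labeling of G with edge-label counts roughly equal whose vertex-label counts differ by at most j. -/
open Finset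

namespace CVDAux

/-- The sign `(-1)^c` of a label. -/
def sgn (c : ZMod 2) : ℤ := if c = 0 then 1 else -1

lemma sgn_add (a b : ZMod 2) : sgn (a + b) = sgn a * sgn b := by
  revert a b; decide

lemma sgn_natCast (r : ℕ) : sgn ((r : ZMod 2)) = (-1) ^ r := by
  induction r with
  | zero => simp [sgn]
  | succ k ih =>
    have h : ∀ a : ZMod 2, sgn (a + 1) = -sgn a := by decide
    push_cast
    rw [h, ih, pow_succ]
    ring

/-- Difference of label counts as a signed sum. -/
lemma filter_card_diff {α : Type*} (s : Finset α) (F : α → ZMod 2) :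
    ((s.filter fun a => F a = 0).card : ℤ) - ((s.filter fun a => F a = 1).card : ℤ)
      = ∑ a ∈ s, sgn (F a) := by
  classical
  have h01 : ∀ c : ZMod 2, ¬ c = 0 → c = 1 := by decide
  rw [← Finset.sum_filter_add_sum_filter_not s (fun a => F a = 0) (fun a => sgn (F a))]
  have h2' : s.filter (fun a => ¬ F a = 0) = s.filter (fun a => F a = 1) := by
    apply Finset.filter_congr
    intro a _
    constructor
    · exact fun h => h01 _ h
    · intro h h0; rw [h] at h0; exact one_ne_zero h0
  have e1 : ∀ a ∈ s.filter (fun a => F a = 0), sgn (F a) = 1 := fun a ha => by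
    rw [(Finset.mem_filter.mp ha).2]; simp [sgn]
  have e2 : ∀ a ∈ s.filter (fun a => F a = 1), sgn (F a) = -1 := fun a ha => by
    rw [(Finset.mem_filter.mp ha).2]; simp [sgn]
  rw [h2', Finset.sum_congr rfl e1, Finset.sum_congr rfl e2, Finset.sum_const,
    Finset.sum_const, nsmul_eq_mul, nsmul_eq_mul]
  ring

/-- Doubling: summing over edges twice equals summing over darts. -/
lemma sum_darts_eq {V : Type*} [Fintype V] [DecidableEq V] (G : SimpleGraph V)
    [DecidableRel G.Adj] (w : Sym2 V → ℤ) :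
    ∑ d : G.Dart, w d.edge = 2 * ∑ e ∈ G.edgeFinset, w e := by
  rw [← Finset.sum_fiberwise_of_maps_to (t := G.edgeFinset) (g := SimpleGraph.Dart.edge)
      (fun d _ => by simpa using d.edge_mem) (fun d => w d.edge), Finset.mul_sum]
  refine Finset.sum_congr rfl fun e he => ?_
  have : ∑ d ∈ Finset.univ.filter (fun d : G.Dart => d.edge = e), w d.edge
      = ∑ _d ∈ Finset.univ.filter (fun d : G.Dart => d.edge = e), w e :=
    Finset.sum_congr rfl fun d hd => by rw [(Finset.mem_filter.mp hd).2]
  rw [this, Finset.sum_const, nsmul_eq_mul]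
  have hc : (Finset.univ.filter (fun d : G.Dart => d.edge = e)).card = 2 :=
    G.dart_edge_fiber_card e (SimpleGraph.mem_edgeFinset.mp he)
  rw [hc]
  push_cast
  ring

/-- Sum over darts as a sum over adjacent ordered pairs. -/
lemma sum_darts_pairs {V : Type*} [Fintype V] [DecidableEq V] (G : SimpleGraph V)
    [DecidableRel G.Adj] (F : V × V → ℤ) :
    ∑ d : G.Dart, F d.toProd
      = ∑ p ∈ Finset.univ.filter (fun p : V × V => G.Adj p.1 p.2), F p := by
  refine Finset.sum_bij (fun d _ => d.toProd) ?_ ?_ ?_ ?_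
  · intro d _; simp [d.adj]
  · intro d _ d' _ h; exact SimpleGraph.Dart.ext _ _ h
  · intro p hp
    exact ⟨⟨p, (Finset.mem_filter.mp hp).2⟩, Finset.mem_univ _, rfl⟩
  · intro d _; rfl

end CVDAux

open CVDAux in
theorem cvd_complete_multipartite_upper_bound
    {ι : Type*} [Fintype ι] [DecidableEq ι] (V : ι → Type*)
    [∀ i, Fintype (V i)] [∀ i, DecidableEq (V i)] [∀ i, Nonempty (V i)]
    (n : ℕ) (hn : n = (Finset.univ.filter fun i => Odd (Fintype.card (V i))).card)
    (hn1 : 1 ≤ n) (j : ℕ) (hj : 0 < j) (δ : ℤ)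
    (hδ : δ = -2 ∨ δ = 0 ∨ δ = 2) (hnj : (n : ℤ) = (j : ℤ) ^ 2 + δ) :
    ∃ f : (Σ i, V i) → ZMod 2,
      |(edgeCount (SimpleGraph.completeMultipartiteGraph V) f 0 : ℤ)
        - (edgeCount (SimpleGraph.completeMultipartiteGraph V) f 1 : ℤ)| ≤ 1 ∧
      |((Finset.univ.filter fun v : Σ i, V i => f v = 0).card : ℤ)
        - ((Finset.univ.filter fun v : Σ i, V i => f v = 1).card : ℤ)| ≤ (j : ℤ) := by
  classical
  -- arithmetic preliminaries
  obtain ⟨q, hq2⟩ : ∃ q, q = j * j := ⟨_, rfl⟩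
  have hm' : ∃ m, q + j = 2 * m := by
    obtain ⟨m, hm⟩ := Nat.even_mul_succ_self j
    exact ⟨m, by rw [Nat.mul_succ] at hm; omega⟩
  obtain ⟨m, hm⟩ := hm'
  have hqj : j = 1 ∨ j + 2 ≤ q := by
    rcases Nat.lt_or_ge j 2 with h | h
    · left; omega
    · right; subst hq2; nlinarith
  have hznq : (n : ℤ) = (q : ℤ) + δ := by
    rw [hnj, hq2]; push_cast; ring
  obtain ⟨t, ht⟩ : ∃ t, 2 * t + j = n := by
    rcases hδ with h | h | h <;> subst h <;>
      [ exact ⟨m - j - 1, by rcases hqj with h1 | h1 <;> omega⟩;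
        exact ⟨m - j, by rcases hqj with h1 | h1 <;> omega⟩;
        exact ⟨m - j + 1, by rcases hqj with h1 | h1 <;> omega⟩ ]
  -- choose the subset of odd parts that get the extra `1`
  set O : Finset ι := Finset.univ.filter fun i => Odd (Fintype.card (V i)) with hO
  obtain ⟨T, hTsub, hTcard⟩ := Finset.exists_subset_card_eq (s := O) (n := t) (by rw [← hn]; omega)
  set f : (Σ i, V i) → ZMod 2 := fun v =>
    (((Fintype.equivFin (V v.1)) v.2 : ℕ) : ZMod 2) + (if v.1 ∈ T then 1 else 0) with hf
  set S : ι → ℤ := fun i => ∑ x : V i, sgn (f ⟨i, x⟩) with hSdef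
  have hS : ∀ i, S i = (if i ∈ T then (-1 : ℤ) else 1)
      * (if Even (Fintype.card (V i)) then 0 else 1) := by
    intro i
    have hterm : ∀ x : V i, sgn (f ⟨i, x⟩)
        = (if i ∈ T then (-1 : ℤ) else 1) * (-1) ^ ((Fintype.equivFin (V i)) x : ℕ) := by
      intro x
      simp only [hf]
      rw [sgn_add, sgn_natCast]
      split_ifs <;> simp [sgn] <;> ring
    simp only [hSdef]
    rw [Finset.sum_congr rfl (fun x _ => hterm x), ← Finset.mul_sum]
    congr 1
    rw [show (∑ x : V i, ((-1 : ℤ)) ^ ((Fintype.equivFin (V i)) x : ℕ))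
        = ∑ r : Fin (Fintype.card (V i)), (-1 : ℤ) ^ (r : ℕ) from
      Fintype.sum_equiv (Fintype.equivFin (V i)) _ _ (fun x => rfl)]
    rw [Fin.sum_univ_eq_sum_range (fun r => (-1 : ℤ) ^ r), neg_one_geom_sum]
  have hSi : ∀ i, S i = ∑ x : V i, sgn (f ⟨i, x⟩) := fun i => by simp only [hSdef]
  have hSsq : ∀ i, S i ^ 2 = if Odd (Fintype.card (V i)) then (1 : ℤ) else 0 := by
    intro i
    rw [hS i]
    rcases Nat.even_or_odd (Fintype.card (V i)) with h2 | h2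
    · rw [if_pos h2, if_neg (Nat.not_odd_iff_even.mpr h2), mul_zero]
      ring
    · rw [if_neg (Nat.not_even_iff_odd.mpr h2), if_pos h2, mul_one]
      split_ifs <;> norm_num
  have hSodd : ∀ i, S i = if Odd (Fintype.card (V i)) then
      (if i ∈ T then (-1 : ℤ) else 1) else 0 := by
    intro i
    rw [hS i]
    rcases Nat.even_or_odd (Fintype.card (V i)) with h2 | h2
    · rw [if_pos h2, if_neg (Nat.not_odd_iff_even.mpr h2), mul_zero]
    · rw [if_neg (Nat.not_even_iff_odd.mpr h2), if_pos h2, mul_one]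
  -- sum of the part-signs
  have hsum1 : ∑ i, S i = (j : ℤ) := by
    rw [Finset.sum_congr rfl fun i _ => hSodd i, ← Finset.sum_filter, ← hO]
    have hsplit : ∀ i : ι, (if i ∈ T then (-1 : ℤ) else 1)
        = 1 - 2 * (if i ∈ T then 1 else 0) := by intro i; split_ifs <;> ring
    rw [Finset.sum_congr rfl fun i _ => hsplit i, Finset.sum_sub_distrib,
      Finset.sum_const, ← Finset.mul_sum, Finset.sum_boole]
    have hfe : O.filter (fun i => i ∈ T) = T :=
      (Finset.filter_mem_eq_inter).trans (Finset.inter_eq_right.mpr hTsub)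
    rw [hfe, hTcard, ← hn]
    simp only [nsmul_eq_mul, mul_one]
    push_cast
    omega
  have hsum2 : ∑ i, S i ^ 2 = (n : ℤ) := by
    rw [Finset.sum_congr rfl fun i _ => hSsq i, Finset.sum_boole, ← hO, ← hn]
  -- total vertex sum
  have hvert : ∑ v : Σ i, V i, sgn (f v) = ∑ i, S i := by
    rw [← Finset.univ_sigma_univ, Finset.sum_sigma]
  refine ⟨f, ?_, ?_⟩
  · -- edge condition
    unfold edgeCount
    rw [filter_card_diff]
    set F : Sym2 (Σ i, V i) → ZMod 2 :=
      Sym2.lift ⟨fun a b => f a + f b, fun _ _ => add_comm _ _⟩ with hF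
    have hdouble : 2 * ∑ e ∈ (SimpleGraph.completeMultipartiteGraph V).edgeFinset, sgn (F e)
        = (∑ i, S i) ^ 2 - ∑ i, S i ^ 2 := by
      rw [← sum_darts_eq]
      have hde : ∀ d : (SimpleGraph.completeMultipartiteGraph V).Dart,
          sgn (F d.edge) = sgn (f d.toProd.1) * sgn (f d.toProd.2) := by
        intro d
        have : d.edge = Sym2.mk d.toProd.1 d.toProd.2 := rfl
        rw [this, hF, Sym2.lift_mk, sgn_add]
      rw [Finset.sum_congr rfl fun d _ => hde d]
      rw [sum_darts_pairs (SimpleGraph.completeMultipartiteGraph V)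
        (fun p => sgn (f p.1) * sgn (f p.2))]
      have hadjf : Finset.univ.filter
            (fun p : (Σ i, V i) × (Σ i, V i) =>
              (SimpleGraph.completeMultipartiteGraph V).Adj p.1 p.2)
          = Finset.univ.filter (fun p : (Σ i, V i) × (Σ i, V i) => ¬ p.1.1 = p.2.1) := by
        apply Finset.filter_congr
        intro p _
        exact Iff.rfl
      rw [hadjf]
      have hsplit := Finset.sum_filter_add_sum_filter_not
        (Finset.univ : Finset ((Σ i, V i) × (Σ i, V i)))
        (fun p => p.1.1 = p.2.1) (fun p => sgn (f p.1) * sgn (f p.2))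
      have hall : ∑ p : (Σ i, V i) × (Σ i, V i), sgn (f p.1) * sgn (f p.2)
          = (∑ i, S i) ^ 2 := by
        rw [Fintype.sum_prod_type]
        rw [show ∑ v : Σ i, V i, ∑ w : Σ i, V i, sgn (f v) * sgn (f w)
            = (∑ v : Σ i, V i, sgn (f v)) * (∑ w : Σ i, V i, sgn (f w)) from
          (Finset.sum_mul_sum _ _ _ _).symm]
        rw [hvert, sq]
      have heq : ∑ p ∈ Finset.univ.filter
            (fun p : (Σ i, V i) × (Σ i, V i) => p.1.1 = p.2.1),
            sgn (f p.1) * sgn (f p.2) = ∑ i, S i ^ 2 := by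
        rw [Finset.sum_filter, Fintype.sum_prod_type, ← Finset.univ_sigma_univ,
          Finset.sum_sigma]
        refine Finset.sum_congr rfl fun i _ => ?_
        have hrhs : S i ^ 2 = ∑ x : V i, sgn (f ⟨i, x⟩) * S i := by
          rw [sq]
          nth_rewrite 1 [hSi i]
          rw [Finset.sum_mul]
        rw [hrhs]
        refine Finset.sum_congr rfl fun x _ => ?_
        rw [Finset.sum_sigma, Finset.sum_eq_single i]
        · rw [hSi i, Finset.mul_sum]
          refine Finset.sum_congr rfl fun y _ => ?_
          simp
        · intro k _ hk
          have hik : i ≠ k := fun h => hk h.symm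
          simp [hik]
        · intro h; exact absurd (Finset.mem_univ i) h
      have := hsplit
      rw [heq, hall] at this
      linarith
    rw [hsum1, hsum2] at hdouble
    have hjq : ((j : ℤ)) ^ 2 - (n : ℤ) = -δ := by linarith [hnj]
    rw [hjq] at hdouble
    rw [abs_le]
    rcases hδ with h | h | h <;> subst h <;> constructor <;> linarith
  · -- vertex condition
    rw [filter_card_diff, hvert, hsum1]
    rw [abs_le]
    constructor <;> omega
end

section
/- For the complete graph K_n: there exists a binary vertex labeling whose induced edge-label counts (edge label = mod-2 sum of endpoints) differ by at most 1 if and only if n = j² + δ for some nonnegative integer j and δ ∈ {-2, 0, 2}. Equivalently, with z vertices labeled 0 out of n, the difference (#0-edges − #1-edges) = C(z,2) + C(n−z,2) − z(n−z) = ((n−2z)² − n)/2, and this lies in {−1,0,1} for some z iff n or n±2 is a perfect square. -/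
open Finset

instance {V : Type*} [DecidableEq V] : DecidableRel (SimpleGraph.completeGraph V).Adj :=
  fun a b => inferInstanceAs (Decidable (a ≠ b))

lemma zmod2_cases : ∀ x : ZMod 2, x = 0 ∨ x = 1 := by decide

lemma zmod2_sum_one : ∀ x y : ZMod 2, x + y = 1 → (x = 0 ∧ y = 1) ∨ (x = 1 ∧ y = 0) := by decide

lemma cross_count {n : ℕ} (f : Fin n → ZMod 2) :
    edgeCount (SimpleGraph.completeGraph (Fin n)) f 1 =
      (univ.filter fun v => f v = 0).card * (univ.filter fun v => f v = 1).card := by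
  rw [← Finset.card_product]
  unfold edgeCount
  symm
  apply Finset.card_bij (fun p _ => Sym2.mk p.1 p.2)
  · rintro ⟨a, b⟩ hp
    simp only [Finset.mem_product, Finset.mem_filter, Finset.mem_univ, true_and] at hp
    simp only [Finset.mem_filter, SimpleGraph.mem_edgeFinset, SimpleGraph.mem_edgeSet,
      SimpleGraph.completeGraph_eq_top, SimpleGraph.top_adj, Sym2.lift_mk]
    refine ⟨fun h => by simp [h, hp.2] at hp, ?_⟩
    rw [hp.1, hp.2]; ring
  · rintro ⟨a, b⟩ ha ⟨a', b'⟩ hb h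
    simp only [Finset.mem_product, Finset.mem_filter, Finset.mem_univ, true_and] at ha hb
    simp only [Sym2.mk_eq_mk_iff, Sym2.eq_iff, Prod.mk.injEq, Prod.swap_prod_mk] at h
    rcases h with ⟨rfl, rfl⟩ | ⟨rfl, rfl⟩
    · rfl
    · exact absurd hb.1 (by rw [ha.2]; decide)
  · intro e he
    induction e with
    | _ x y =>
      simp only [Finset.mem_filter, SimpleGraph.mem_edgeFinset, SimpleGraph.mem_edgeSet,
        SimpleGraph.completeGraph_eq_top, SimpleGraph.top_adj, Sym2.lift_mk] at he
      rcases zmod2_sum_one _ _ he.2 with ⟨h1, h2⟩ | ⟨h1, h2⟩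
      · exact ⟨(x, y), by simp [Finset.mem_product, h1, h2], rfl⟩
      · exact ⟨(y, x), by simp [Finset.mem_product, h1, h2], Sym2.eq_swap⟩

lemma count_sum {n : ℕ} (f : Fin n → ZMod 2) :
    edgeCount (SimpleGraph.completeGraph (Fin n)) f 0 + edgeCount (SimpleGraph.completeGraph (Fin n)) f 1 =
      n.choose 2 := by
  unfold edgeCount
  have h : ∀ e : Sym2 (Fin n),
      (Sym2.lift ⟨fun a b => f a + f b, fun _ _ => add_comm _ _⟩ e = 1) ↔
      ¬ (Sym2.lift ⟨fun a b => f a + f b, fun _ _ => add_comm _ _⟩ e = 0) := by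
    intro e
    rcases zmod2_cases (Sym2.lift ⟨fun a b => f a + f b, fun _ _ => add_comm _ _⟩ e) with h | h <;>
      simp [h]
  rw [Finset.filter_congr (fun e _ => h e),
    Finset.card_filter_add_card_filter_not]
  · rw [show (SimpleGraph.completeGraph (Fin n)).edgeFinset = (⊤ : SimpleGraph (Fin n)).edgeFinset from by
        ext e; simp [SimpleGraph.mem_edgeFinset, SimpleGraph.completeGraph_eq_top],
      SimpleGraph.card_edgeFinset_top_eq_card_choose_two, Fintype.card_fin]

lemma two_choose_two (n : ℕ) : 2 * n.choose 2 = n * (n - 1) := by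
  rw [Nat.choose_two_right, Nat.mul_div_cancel']
  rcases Nat.even_or_odd n with h | h
  · exact h.two_dvd.mul_right _
  · obtain ⟨k, hk⟩ := h
    exact Dvd.dvd.mul_left (by omega : 2 ∣ n - 1) n

lemma key_identity {n : ℕ} (f : Fin n → ZMod 2) :
    2 * ((edgeCount (SimpleGraph.completeGraph (Fin n)) f 0 : ℤ)
        - (edgeCount (SimpleGraph.completeGraph (Fin n)) f 1 : ℤ))
      = ((n : ℤ) - 2 * (univ.filter fun v => f v = 0).card) ^ 2 - n := by
  set z := (univ.filter fun v => f v = 0).card with hz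
  set w := (univ.filter fun v => f v = 1).card with hw
  have h1 : (z : ℤ) + w = n := by
    have hcongr : (univ.filter fun v => f v = 1) = (univ.filter fun v => ¬ f v = 0) := by
      apply Finset.filter_congr
      intro v _
      rcases zmod2_cases (f v) with h | h <;> rw [h] <;> decide
    have : z + w = n := by
      rw [hw, hcongr, hz, Finset.card_filter_add_card_filter_not,
        Finset.card_univ, Fintype.card_fin]
    exact_mod_cast this
  have h4 : (edgeCount (SimpleGraph.completeGraph (Fin n)) f 1 : ℤ) = z * w := by
    exact_mod_cast congrArg Nat.cast (cross_count f)
  have h3 : (edgeCount (SimpleGraph.completeGraph (Fin n)) f 0 : ℤ)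
      + edgeCount (SimpleGraph.completeGraph (Fin n)) f 1 = n.choose 2 := by
    exact_mod_cast congrArg Nat.cast (count_sum f)
  have h2 : 2 * (n.choose 2 : ℤ) = n * (n - 1) := by
    cases n with
    | zero => simp
    | succ m =>
      have h : 2 * ((m+1).choose 2) = (m+1) * m := by simpa using two_choose_two (m+1)
      rw [show (2:ℤ) * (((m+1).choose 2 : ℕ) : ℤ) = ((2 * (m+1).choose 2 : ℕ) : ℤ) by
        push_cast; ring, h]
      push_cast; ring
  linear_combination 2 * h3 + h2 - 4 * h4 - 4 * (z : ℤ) * h1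

lemma card_indicator {n z : ℕ} (hzn : z ≤ n) :
    (univ.filter fun v : Fin n => (if (v : ℕ) < z then (0 : ZMod 2) else 1) = 0).card = z := by
  have he : (univ.filter fun v : Fin n => (if (v : ℕ) < z then (0 : ZMod 2) else 1) = 0)
      = (Finset.range z).attachFin
          (fun m hm => lt_of_lt_of_le (Finset.mem_range.mp hm) hzn) := by
    ext v
    simp only [Finset.mem_filter, Finset.mem_univ, true_and, Finset.mem_attachFin,
      Finset.mem_range]
    by_cases h : (v : ℕ) < z <;> simp [h]
  rw [he, Finset.card_attachFin, Finset.card_range]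

theorem Kn_rough_edge_balance_iff (n : ℕ) :
    (∃ f : Fin n → ZMod 2,
      |(edgeCount (SimpleGraph.completeGraph (Fin n)) f 0 : ℤ)
        - (edgeCount (SimpleGraph.completeGraph (Fin n)) f 1 : ℤ)| ≤ 1)
    ↔ ∃ j : ℕ, (n : ℤ) = (j : ℤ) ^ 2 - 2 ∨ (n : ℤ) = (j : ℤ) ^ 2
        ∨ (n : ℤ) = (j : ℤ) ^ 2 + 2 := by
  constructor
  · rintro ⟨f, hf⟩
    set z := (univ.filter fun v => f v = 0).card with hz
    have hk := key_identity f
    rw [← hz] at hk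
    set j := ((n : ℤ) - 2 * z).natAbs with hj
    refine ⟨j, ?_⟩
    have hsq : ((j : ℤ)) ^ 2 = ((n : ℤ) - 2 * z) ^ 2 := by
      rw [hj]; rw [Int.natAbs_sq]
    rw [← hsq] at hk
    rw [abs_le] at hf
    generalize hK : ((j : ℤ)) ^ 2 = K at hk ⊢
    omega
  · rintro ⟨j, hj⟩
    obtain ⟨c, hc⟩ : (2 : ℤ) ∣ (j : ℤ) ^ 2 - j := by
      obtain ⟨k, hk⟩ := Int.even_mul_succ_self ((j : ℤ) - 1)
      exact ⟨k, by linear_combination hk⟩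
    have hjn : (j : ℤ) ≤ n := by
      rcases le_or_gt j 1 with h | h
      · interval_cases j <;> rcases hj with h' | h' | h' <;> norm_num at h' <;> omega
      · have h2 : (2 : ℤ) ≤ j := by exact_mod_cast h
        rcases hj with h' | h' | h' <;>
          nlinarith [mul_nonneg (by linarith : (0:ℤ) ≤ (j:ℤ) - 2) (by linarith : (0:ℤ) ≤ (j:ℤ) + 1)]
    have h2 : (2 : ℤ) ∣ (n : ℤ) - j := by
      rcases hj with h' | h' | h'
      · exact ⟨c - 1, by linear_combination h' + hc⟩
      · exact ⟨c, by linear_combination h' + hc⟩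
      · exact ⟨c + 1, by linear_combination h' + hc⟩
    obtain ⟨z, hzn, hzval⟩ : ∃ z : ℕ, z ≤ n ∧ 2 * (z : ℤ) = n - j :=
      ⟨(n - j) / 2, by omega, by omega⟩
    refine ⟨fun v => if (v : ℕ) < z then 0 else 1, ?_⟩
    have hk := key_identity (fun v : Fin n => if (v : ℕ) < z then (0 : ZMod 2) else 1)
    rw [card_indicator hzn] at hk
    rw [show (n : ℤ) - 2 * z = j by omega] at hk
    rw [abs_le]
    generalize hK : ((j : ℤ)) ^ 2 = K at hk hj
    omega
end

section
/- If G₁ is a connected simple bipartite graph and G₂ is a simple graph with q edges, then the tensor product G₁ × G₂ can be decomposed into 2q edge-disjoint subgraphs each isomorphic to G₁, whose edge sets partition the edge set of G₁ × G₂. -/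
/-- The tensor (categorical) product of two simple graphs. -/
def tensorProd {α β : Type*} (G : SimpleGraph α) (H : SimpleGraph β) :
    SimpleGraph (α × β) where
  Adj x y := G.Adj x.1 y.1 ∧ H.Adj x.2 y.2
  symm := ⟨fun _ _ h => ⟨h.1.symm, h.2.symm⟩⟩
  loopless := ⟨fun x h => G.irrefl h.1⟩

private lemma fin2_cases {s t : Fin 2} (h : s ≠ t) :
    (s = 0 ∧ t = 1) ∨ (s = 1 ∧ t = 0) := by omega

theorem tensor_product_decomposition
    {V₁ V₂ : Type*} [Fintype V₁] [Fintype V₂] [DecidableEq V₁] [DecidableEq V₂]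
    (G₁ : SimpleGraph V₁) (G₂ : SimpleGraph V₂) [DecidableRel G₂.Adj]
    (hconn : G₁.Connected) (hbip : G₁.Colorable 2)
    (q : ℕ) (hq : q = G₂.edgeFinset.card) :
    ∃ H : Fin (2 * q) → (tensorProd G₁ G₂).Subgraph,
      (∀ i, Nonempty ((H i).coe ≃g G₁)) ∧
      (∀ i j, i ≠ j → Disjoint (H i).edgeSet (H j).edgeSet) ∧
      (⋃ i, (H i).edgeSet) = (tensorProd G₁ G₂).edgeSet := by
  classical
  obtain ⟨c⟩ := hbip
  have hcard : Fintype.card G₂.Dart = 2 * q := by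
    rw [hq, SimpleGraph.dart_card_eq_twice_card_edges]
  let e : Fin (2 * q) ≃ G₂.Dart := (Fintype.equivFinOfCardEq hcard).symm
  let F : G₂.Dart → V₁ → V₂ := fun d v => if c v = 0 then d.fst else d.snd
  have hF : ∀ (d : G₂.Dart) {u v : V₁}, G₁.Adj u v → G₂.Adj (F d u) (F d v) := by
    intro d u v huv
    rcases fin2_cases (c.valid huv) with ⟨h1, h2⟩ | ⟨h1, h2⟩ <;>
      simp [F, h1, h2, d.adj, d.adj.symm]
  refine ⟨fun i =>
    { verts := {x | x.2 = F (e i) x.1}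
      Adj := fun x y => G₁.Adj x.1 y.1 ∧ x.2 = F (e i) x.1 ∧ y.2 = F (e i) y.1
      adj_sub := fun {x y} h => ⟨h.1, by rw [h.2.1, h.2.2]; exact hF _ h.1⟩
      edge_vert := fun h => h.2.1
      symm := ⟨fun x y h => ⟨h.1.symm, h.2.2, h.2.1⟩⟩ }, ?_, ?_, ?_⟩
  · intro i
    refine ⟨SimpleGraph.Iso.symm ⟨{
      toFun := fun v => ⟨(v, F (e i) v), rfl⟩
      invFun := fun x => x.1.1
      left_inv := fun v => rfl
      right_inv := fun x => Subtype.ext (Prod.ext rfl x.2.symm) }, ?_⟩⟩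
    intro u v
    simp [SimpleGraph.Subgraph.coe_adj]
  · intro i j hij
    rw [Set.disjoint_left]
    intro s hi hj
    induction s with
    | h x y =>
      rw [SimpleGraph.Subgraph.mem_edgeSet] at hi hj
      apply hij
      apply e.injective
      have hxy : c x.1 ≠ c y.1 := c.valid hi.1
      apply SimpleGraph.Dart.ext
      have h1 := hi.2.1.symm.trans hj.2.1
      have h2 := hi.2.2.symm.trans hj.2.2
      rcases fin2_cases hxy with ⟨hc1, hc2⟩ | ⟨hc1, hc2⟩
      · simp only [F, hc1, hc2] at h1 h2
        norm_num at h1 h2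
        exact Prod.ext h1 h2
      · simp only [F, hc1, hc2] at h1 h2
        norm_num at h1 h2
        exact Prod.ext h2 h1
  · ext s
    induction s with
    | h x y =>
      simp only [Set.mem_iUnion, SimpleGraph.Subgraph.mem_edgeSet,
        SimpleGraph.mem_edgeSet]
      constructor
      · rintro ⟨i, h, hx, hy⟩
        exact ⟨h, by rw [hx, hy]; exact hF _ h⟩
      · rintro ⟨h1, h2⟩
        rcases fin2_cases (c.valid h1) with ⟨hc1, hc2⟩ | ⟨hc1, hc2⟩
        · refine ⟨e.symm ⟨(x.2, y.2), h2⟩, h1, ?_, ?_⟩ <;>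
            simp [F, hc1, hc2, e]
        · refine ⟨e.symm ⟨(y.2, x.2), h2.symm⟩, h1, ?_, ?_⟩ <;>
            simp [F, hc1, hc2, e]
end
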